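/- arXiv:1401.0081 — 5 statements merged into one kernel-verified Lean document; each statement's English description precedes it below -/
import Mathlib

section
/- If Q ⪯ 0 (negative semidefinite), then the optimal value of the SDP: maximize Q̃ • Y subject to eᵀYe ≤ 1, Y_{i,n+i} = 0 for i = 1,...,n, Y ≥ 0 componentwise, and Y ⪰ 0, equals 0, where Q̃ = [[Q, -Q], [-Q, Q]]. -/
open Matrix

private lemma psd_trace_nonneg {m : Type*} [Fintype m] [DecidableEq m]
    {M : Matrix m m ℝ} (hM : M.PosSemidef) : 0 ≤ Matrix.trace M := by
  apply Finset.sum_nonneg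
  intro i _
  exact hM.diag_nonneg

theorem stmt_4 (n : ℕ) (Q : Matrix (Fin n) (Fin n) ℝ)
    (hQsym : Q.IsSymm) (hQ : (-Q).PosSemidef)
    (Qt : Matrix (Fin n ⊕ Fin n) (Fin n ⊕ Fin n) ℝ)
    (hQt : Qt = Matrix.fromBlocks Q (-Q) (-Q) Q) :
    IsGreatest {v : ℝ | ∃ Y : Matrix (Fin n ⊕ Fin n) (Fin n ⊕ Fin n) ℝ,
        (∑ i, ∑ j, Y i j) ≤ 1 ∧
        (∀ i : Fin n, Y (Sum.inl i) (Sum.inr i) = 0) ∧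
        (∀ i j, 0 ≤ Y i j) ∧ Y.PosSemidef ∧
        v = Matrix.trace (Qt * Y)} 0 := by
  constructor
  · exact ⟨0, by simp, by simp, by simp, Matrix.PosSemidef.zero, by simp⟩
  · rintro v ⟨Y, -, -, -, hYpsd, rfl⟩
    open scoped MatrixOrder in set C := CFC.sqrt (-Q) with hC
    set B : Matrix (Fin n) (Fin n ⊕ Fin n) ℝ := Matrix.fromCols C (-C) with hB
    have hCsym : Cᵀ = C := by open scoped MatrixOrder in exact (CFC.sqrt_nonneg (-Q)).posSemidef.1.eq
    have hCC : C * C = -Q := by open scoped MatrixOrder in exact CFC.sqrt_mul_sqrt_self (-Q) hQ.nonneg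
    have hQtB : Qt = -(Bᴴ * B) := by
      rw [hQt, hB, Matrix.conjTranspose_fromCols_eq_fromRows_conjTranspose,
        Matrix.fromRows_mul_fromCols]
      have : Cᴴ = C := hCsym
      rw [this]
      simp only [Matrix.conjTranspose_neg, this, Matrix.mul_neg, Matrix.neg_mul, neg_neg,
        hCC]
      ext (i | i) (j | j) <;> simp [Matrix.fromBlocks]
    have key : (B * Y * Bᴴ).PosSemidef := hYpsd.mul_mul_conjTranspose_same B
    have : Matrix.trace (Qt * Y) = -(Matrix.trace (B * Y * Bᴴ)) := by
      rw [hQtB]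
      rw [Matrix.neg_mul, Matrix.trace_neg, Matrix.mul_assoc, Matrix.trace_mul_comm,
        Matrix.mul_assoc]
    rw [this]
    simpa using psd_trace_nonneg key
end

section
/- The optimal value of the SDP relaxation DNN_{L1}^{new}: maximize Q̃ • Y over symmetric 2n×2n matrices Y with eᵀYe ≤ 1, Y_{i,n+i} = 0 for all i, Y ≥ 0 componentwise, Y ⪰ 0, is at most the optimal value of DNN_{L1}: maximize Q̃ • Y over Y with eᵀYe = 1, Y ≥ 0 componentwise, Y ⪰ 0 (here considering the supremum of each feasible set, and assuming the DNN_{L1}^{new} optimum is attained). -/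
open Matrix

lemma psd_smul' {k : Type*} [Fintype k] {M : Matrix k k ℝ} (h : M.PosSemidef) {c : ℝ}
    (hc : 0 ≤ c) : (c • M).PosSemidef := by
  refine Matrix.PosSemidef.of_dotProduct_mulVec_nonneg ?_ fun x => ?_
  · unfold Matrix.IsHermitian
    rw [conjTranspose_smul, h.1]; simp
  · have := h.dotProduct_mulVec_nonneg x
    rw [smul_mulVec, dotProduct_smul]
    exact mul_nonneg hc this

lemma psd_outer' {k : Type*} [Fintype k] (v : k → ℝ) :
    (Matrix.of fun i j => v i * v j).PosSemidef := by
  refine Matrix.PosSemidef.of_dotProduct_mulVec_nonneg ?_ fun x => ?_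
  · ext i j; simp [Matrix.IsHermitian, conjTranspose_apply, mul_comm]
  · have : dotProduct (star x) ((Matrix.of fun i j => v i * v j) *ᵥ x)
        = (∑ i, v i * x i) ^ 2 := by
      simp only [dotProduct, mulVec, star, Pi.star_apply, star_trivial, of_apply]
      rw [sq, Finset.sum_mul_sum]
      simp only [dotProduct, Finset.mul_sum]
      apply Finset.sum_congr rfl; intro i _
      apply Finset.sum_congr rfl; intro j _
      ring
    rw [this]; positivity

theorem stmt_5 (n : ℕ) (hn : 0 < n) (Q : Matrix (Fin n) (Fin n) ℝ) (hQsym : Q.IsSymm)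
    (Qt : Matrix (Fin n ⊕ Fin n) (Fin n ⊕ Fin n) ℝ)
    (hQt : Qt = Matrix.fromBlocks Q (-Q) (-Q) Q)
    (m : ℝ)
    (hm : IsGreatest {v : ℝ | ∃ Y : Matrix (Fin n ⊕ Fin n) (Fin n ⊕ Fin n) ℝ,
        (∑ i, ∑ j, Y i j) ≤ 1 ∧
        (∀ i : Fin n, Y (Sum.inl i) (Sum.inr i) = 0) ∧
        (∀ i j, 0 ≤ Y i j) ∧ Y.PosSemidef ∧
        v = Matrix.trace (Qt * Y)} m) :
    m ≤ sSup {v : ℝ | ∃ Y : Matrix (Fin n ⊕ Fin n) (Fin n ⊕ Fin n) ℝ,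
        (∑ i, ∑ j, Y i j) = 1 ∧
        (∀ i j, 0 ≤ Y i j) ∧ Y.PosSemidef ∧
        v = Matrix.trace (Qt * Y)} := by
  set S := {v : ℝ | ∃ Y : Matrix (Fin n ⊕ Fin n) (Fin n ⊕ Fin n) ℝ,
        (∑ i, ∑ j, Y i j) = 1 ∧
        (∀ i j, 0 ≤ Y i j) ∧ Y.PosSemidef ∧
        v = Matrix.trace (Qt * Y)} with hS
  -- trace formula
  have htr : ∀ Y : Matrix (Fin n ⊕ Fin n) (Fin n ⊕ Fin n) ℝ,
      Matrix.trace (Qt * Y) = ∑ i, ∑ j, Qt i j * Y j i := by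
    intro Y
    simp [Matrix.trace, Matrix.mul_apply, Matrix.diag]
  -- S is bounded above
  have hbdd : BddAbove S := by
    refine ⟨∑ i, ∑ j, |Qt i j|, fun v hv => ?_⟩
    obtain ⟨Y, hsum, hnn, _, rfl⟩ := hv
    rw [htr]
    apply Finset.sum_le_sum; intro i _
    apply Finset.sum_le_sum; intro j _
    have hY1 : Y j i ≤ 1 := by
      calc Y j i ≤ ∑ j', Y j j' :=
            Finset.single_le_sum (fun k _ => hnn j k) (Finset.mem_univ i)
        _ ≤ ∑ i', ∑ j', Y i' j' :=
            Finset.single_le_sum (f := fun i' => ∑ j', Y i' j')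
              (fun k _ => Finset.sum_nonneg fun l _ => hnn k l) (Finset.mem_univ j)
        _ = 1 := hsum
    calc Qt i j * Y j i ≤ |Qt i j| * Y j i :=
          mul_le_mul_of_nonneg_right (le_abs_self _) (hnn j i)
      _ ≤ |Qt i j| * 1 := mul_le_mul_of_nonneg_left hY1 (abs_nonneg _)
      _ = |Qt i j| := mul_one _
  -- 0 ∈ S
  have h0S : (0 : ℝ) ∈ S := by
    set i0 : Fin n := ⟨0, hn⟩
    set v : Fin n ⊕ Fin n → ℝ :=
      Sum.elim (fun a => if a = i0 then (1/2 : ℝ) else 0)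
        (fun a => if a = i0 then (1/2 : ℝ) else 0) with hv
    refine ⟨Matrix.of fun i j => v i * v j, ?_, ?_, psd_outer' v, ?_⟩
    · have hvs : ∑ k, v k = 1 := by
        simp [hv, Fintype.sum_sum_type, Finset.sum_ite_eq']
        norm_num
      have : (∑ i, ∑ j, (Matrix.of fun i j => v i * v j) i j)
          = (∑ k, v k) * (∑ k, v k) := by
        rw [Finset.sum_mul_sum]
        simp [Finset.mul_sum]
      rw [this, hvs, mul_one]
    · intro i j
      have h1 : 0 ≤ v i := by rcases i with a | a <;> simp [hv] <;> split <;> norm_num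
      have h2 : 0 ≤ v j := by rcases j with a | a <;> simp [hv] <;> split <;> norm_num
      exact mul_nonneg h1 h2
    · rw [htr]
      simp only [of_apply, hv, hQt, Fintype.sum_sum_type, Sum.elim_inl, Sum.elim_inr,
        fromBlocks_apply₁₁, fromBlocks_apply₁₂, fromBlocks_apply₂₁, fromBlocks_apply₂₂,
        mul_ite, mul_zero, ite_mul, zero_mul, Finset.sum_ite_eq', Finset.mem_univ, if_true]
      simp only [Finset.sum_add_distrib, Finset.sum_ite_eq', Finset.mem_univ, if_true,
        Matrix.neg_apply]
      ring
  -- 0 ≤ m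
  have hm0 : 0 ≤ m := by
    apply hm.2
    exact ⟨0, by simp, by simp, by simp, Matrix.PosSemidef.zero, by simp⟩
  rcases eq_or_lt_of_le hm0 with h | h
  · rw [← h]
    exact le_csSup hbdd h0S
  · -- m > 0
    obtain ⟨Y, hsum, _, hnn, hpsd, hval⟩ := hm.1
    set s : ℝ := ∑ i, ∑ j, Y i j with hs
    have hs0 : 0 ≤ s := Finset.sum_nonneg fun i _ => Finset.sum_nonneg fun j _ => hnn i j
    have hsne : s ≠ 0 := by
      intro h0
      have hY0 : Y = 0 := by
        ext i j
        have h1 : ∑ j, Y i j = 0 := by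
          have := (Finset.sum_eq_zero_iff_of_nonneg
            (fun k (_ : k ∈ Finset.univ) => Finset.sum_nonneg fun l _ => hnn k l)).mp
            (by rw [← hs]; exact h0) i (Finset.mem_univ i)
          exact this
        exact (Finset.sum_eq_zero_iff_of_nonneg
          (fun l (_ : l ∈ Finset.univ) => hnn i l)).mp h1 j (Finset.mem_univ j)
      rw [hY0] at hval
      simp at hval
      exact absurd hval (ne_of_gt h)
    have hspos : 0 < s := lt_of_le_of_ne hs0 (Ne.symm hsne)
    have hmem : s⁻¹ * m ∈ S := by
      refine ⟨s⁻¹ • Y, ?_, ?_, psd_smul' hpsd (inv_nonneg.mpr hs0), ?_⟩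
      · simp only [Matrix.smul_apply, smul_eq_mul, ← Finset.mul_sum]
        rw [← hs, inv_mul_cancel₀ hsne]
      · intro i j
        exact mul_nonneg (inv_nonneg.mpr hs0) (hnn i j)
      · rw [Matrix.mul_smul, Matrix.trace_smul, ← hval, smul_eq_mul]
    have : m ≤ s⁻¹ * m := by
      rw [← div_eq_inv_mul, le_div_iff₀ hspos]
      nlinarith
    exact this.trans (le_csSup hbdd hmem)
end

section
/- Suppose all diagonal entries of Q are nonnegative. If Y* is feasible for DNN_{L1} (i.e., eᵀY*e = 1, Y* ≥ 0, Y* ⪰ 0), then there exists Ỹ with eᵀỸe = 1, Ỹ ≥ 0, Ỹ ⪰ 0, Ỹ_{i,n+i} = 0 for all i = 1,...,n, and Q̃ • Ỹ ≥ Q̃ • Y*. -/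
open Matrix

theorem stmt_8 (n : ℕ) (Q : Matrix (Fin n) (Fin n) ℝ) (hQsym : Q.IsSymm)
    (hdiag : ∀ i, 0 ≤ Q i i)
    (Qt : Matrix (Fin n ⊕ Fin n) (Fin n ⊕ Fin n) ℝ)
    (hQt : Qt = Matrix.fromBlocks Q (-Q) (-Q) Q)
    (Y : Matrix (Fin n ⊕ Fin n) (Fin n ⊕ Fin n) ℝ)
    (hsum : (∑ i, ∑ j, Y i j) = 1)
    (hnonneg : ∀ i j, 0 ≤ Y i j) (hpsd : Y.PosSemidef) :
    ∃ Yt : Matrix (Fin n ⊕ Fin n) (Fin n ⊕ Fin n) ℝ,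
      (∑ i, ∑ j, Yt i j) = 1 ∧
      (∀ i j, 0 ≤ Yt i j) ∧ Yt.PosSemidef ∧
      (∀ i : Fin n, Yt (Sum.inl i) (Sum.inr i) = 0) ∧
      Matrix.trace (Qt * Y) ≤ Matrix.trace (Qt * Yt) := by
  set δ : Fin n → ℝ := fun a => Y (Sum.inl a) (Sum.inr a) with hδ
  have hδnn : ∀ a, 0 ≤ δ a := fun a => hnonneg _ _
  have hYsym : ∀ i j, Y j i = Y i j := by
    intro i j
    have := hpsd.1
    rw [Matrix.IsHermitian] at this
    calc Y j i = Yᴴ i j := by simp [Matrix.conjTranspose_apply]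
    _ = Y i j := by rw [this]
  set Z : Matrix (Fin n ⊕ Fin n) (Fin n ⊕ Fin n) ℝ :=
    Matrix.of fun i j =>
      Sum.elim
        (fun a => Sum.elim (fun b => if a = b then δ a else 0)
                           (fun b => if a = b then -δ a else 0) j)
        (fun a => Sum.elim (fun b => if a = b then -δ a else 0)
                           (fun b => if a = b then δ a else 0) j) i with hZ
  have hZll : ∀ a b, Z (Sum.inl a) (Sum.inl b) = if a = b then δ a else 0 := fun a b => rfl
  have hZlr : ∀ a b, Z (Sum.inl a) (Sum.inr b) = if a = b then -δ a else 0 := fun a b => rfl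
  have hZrl : ∀ a b, Z (Sum.inr a) (Sum.inl b) = if a = b then -δ a else 0 := fun a b => rfl
  have hZrr : ∀ a b, Z (Sum.inr a) (Sum.inr b) = if a = b then δ a else 0 := fun a b => rfl
  refine ⟨Y + Z, ?_, ?_, ?_, ?_, ?_⟩
  · -- sum = 1
    have hZsum : (∑ i, ∑ j, Z i j) = 0 := by
      simp [Fintype.sum_sum_type, hZll, hZlr, hZrl, hZrr, Finset.sum_ite_eq]
    calc (∑ i, ∑ j, (Y + Z) i j) = ∑ i, ((∑ j, Y i j) + ∑ j, Z i j) := by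
          exact Finset.sum_congr rfl fun i _ => by rw [← Finset.sum_add_distrib]; rfl
      _ = (∑ i, ∑ j, Y i j) + ∑ i, ∑ j, Z i j := Finset.sum_add_distrib
      _ = 1 := by rw [hsum, hZsum, add_zero]
  · -- nonneg
    rintro (a|a) (b|b) <;> simp only [Matrix.add_apply, hZll, hZlr, hZrl, hZrr]
    · split
      · exact add_nonneg (hnonneg _ _) (hδnn a)
      · simpa using hnonneg (Sum.inl a) (Sum.inl b)
    · rcases eq_or_ne a b with rfl | hab
      · simp; exact le_rfl
      · simp only [if_neg hab, add_zero]; exact hnonneg _ _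
    · rcases eq_or_ne a b with rfl | hab
      · simp [hYsym (Sum.inl a) (Sum.inr a)]; exact le_rfl
      · simp only [if_neg hab, add_zero]; exact hnonneg _ _
    · split
      · exact add_nonneg (hnonneg _ _) (hδnn a)
      · simpa using hnonneg (Sum.inr a) (Sum.inr b)
  · -- PSD
    rw [Matrix.posSemidef_iff_dotProduct_mulVec]
    constructor
    · rw [Matrix.IsHermitian]
      ext i j
      simp only [Matrix.conjTranspose_apply, Matrix.add_apply, star_trivial]
      rw [hYsym]
      congr 1
      rcases j with a|a <;> rcases i with b|b <;>
        · rcases eq_or_ne a b with rfl|h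
          · simp [hZll, hZlr, hZrl, hZrr]
          · simp [hZll, hZlr, hZrl, hZrr, h, h.symm]
    · intro x
      have hmv : ∀ i, (Z *ᵥ x) i =
          Sum.elim (fun a => δ a * x (Sum.inl a) - δ a * x (Sum.inr a))
                   (fun a => δ a * x (Sum.inr a) - δ a * x (Sum.inl a)) i := by
        rintro (a|a) <;>
          simp [Matrix.mulVec, dotProduct, Fintype.sum_sum_type,
            hZll, hZlr, hZrl, hZrr, ite_mul, Finset.sum_ite_eq, sub_eq_add_neg] <;> ring
      have hq : dotProduct (star x) (Z *ᵥ x) =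
          ∑ a, δ a * (x (Sum.inl a) - x (Sum.inr a))^2 := by
        simp only [dotProduct, star_trivial, Pi.star_apply, hmv,
          Fintype.sum_sum_type, Sum.elim_inl, Sum.elim_inr]
        rw [← Finset.sum_add_distrib]
        refine Finset.sum_congr rfl fun a _ => ?_
        ring
      have h1 := hpsd.dotProduct_mulVec_nonneg x
      have h2 : (0:ℝ) ≤ dotProduct (star x) (Z *ᵥ x) := by
        rw [hq]
        exact Finset.sum_nonneg fun a _ => mul_nonneg (hδnn a) (sq_nonneg _)
      calc (0:ℝ) ≤ dotProduct (star x) (Y *ᵥ x) + dotProduct (star x) (Z *ᵥ x) :=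
            add_nonneg h1 h2
        _ = dotProduct (star x) ((Y + Z) *ᵥ x) := by
            rw [Matrix.add_mulVec, dotProduct_add]
  · -- zero entries
    intro i
    simp [Matrix.add_apply, hZlr, hδ]
  · -- trace
    rw [Matrix.mul_add, Matrix.trace_add]
    have : (0:ℝ) ≤ Matrix.trace (Qt * Z) := by
      have hexp : Matrix.trace (Qt * Z) = ∑ a, 4 * (Q a a * δ a) := by
        subst hQt
        simp only [Matrix.trace, Matrix.diag, Matrix.mul_apply, Fintype.sum_sum_type,
          Matrix.fromBlocks_apply₁₁, Matrix.fromBlocks_apply₁₂,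
          Matrix.fromBlocks_apply₂₁, Matrix.fromBlocks_apply₂₂,
          hZll, hZlr, hZrl, hZrr, Matrix.neg_apply, mul_ite, mul_zero, mul_neg,
          Finset.sum_ite_eq, Finset.mem_univ, if_true]
        rw [← Finset.sum_add_distrib]
        refine Finset.sum_congr rfl fun a _ => ?_
        simp [eq_comm]
        ring
      rw [hexp]
      exact Finset.sum_nonneg fun a _ =>
        mul_nonneg (by norm_num) (mul_nonneg (hdiag a) (hδnn a))
    linarith
end

section
/- The set {x ∈ ℝⁿ : ‖x‖₂ = 1, ‖x‖₁² ≤ k} equals {√k · A y : y ∈ ℝ^{2n}, k·yᵀAᵀAy = 1, eᵀy ≤ 1, y ≥ 0, y_i y_{n+i} = 0 for i = 1,...,n}, where A = [I, -I] and k ≥ 1. -/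
open Matrix

theorem stmt_17 (n : ℕ) (k : ℝ) (hk : 1 ≤ k)
    (A : Matrix (Fin n) (Fin n ⊕ Fin n) ℝ)
    (hA : A = Matrix.fromCols (1 : Matrix (Fin n) (Fin n) ℝ) (-1 : Matrix (Fin n) (Fin n) ℝ)) :
    {x : Fin n → ℝ | (∑ i, (x i) ^ 2) = 1 ∧ (∑ i, |x i|) ^ 2 ≤ k} =
      {x : Fin n → ℝ | ∃ y : Fin n ⊕ Fin n → ℝ,
        x = Real.sqrt k • (A *ᵥ y) ∧
        k * (y ⬝ᵥ (Aᵀ * A) *ᵥ y) = 1 ∧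
        (∑ j, y j) ≤ 1 ∧
        (∀ j, 0 ≤ y j) ∧
        ∀ i : Fin n, y (Sum.inl i) * y (Sum.inr i) = 0} := by
  have hk0 : (0:ℝ) < k := lt_of_lt_of_le one_pos hk
  have hs : (0:ℝ) < Real.sqrt k := Real.sqrt_pos.mpr hk0
  have hsk : Real.sqrt k ^ 2 = k := Real.sq_sqrt hk0.le
  have hAv : ∀ y : Fin n ⊕ Fin n → ℝ, A *ᵥ y = fun i => y (Sum.inl i) - y (Sum.inr i) := by
    intro y
    funext i
    subst hA
    simp [mulVec, dotProduct, Fintype.sum_sum_type, fromCols, Matrix.one_apply,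
      ite_mul, Finset.sum_ite_eq, sub_eq_add_neg]
  have hquad : ∀ y : Fin n ⊕ Fin n → ℝ,
      y ⬝ᵥ (Aᵀ * A) *ᵥ y = ∑ i, (y (Sum.inl i) - y (Sum.inr i)) ^ 2 := by
    intro y
    rw [← mulVec_mulVec, dotProduct_mulVec, vecMul_transpose, hAv]
    simp [dotProduct, sq]
  ext x
  simp only [Set.mem_setOf_eq]
  constructor
  · rintro ⟨h1, h2⟩
    refine ⟨Sum.elim (fun i => max (x i) 0 / Real.sqrt k) (fun i => max (-x i) 0 / Real.sqrt k),
      ?_, ?_, ?_, ?_, ?_⟩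
    · funext i
      rw [Pi.smul_apply, hAv]
      simp only [Sum.elim_inl, Sum.elim_inr, smul_eq_mul]
      rw [div_sub_div_same, mul_div_cancel₀ _ hs.ne']
      rcases le_total (x i) 0 with h | h
      · simp [max_eq_right h, max_eq_left (neg_nonneg.mpr h)]
      · simp [max_eq_left h, max_eq_right (neg_nonpos.mpr h)]
    · rw [hquad]
      have : ∀ i : Fin n, (Sum.elim (fun i => max (x i) 0 / Real.sqrt k)
          (fun i => max (-x i) 0 / Real.sqrt k) (Sum.inl i) -
          Sum.elim (fun i => max (x i) 0 / Real.sqrt k)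
          (fun i => max (-x i) 0 / Real.sqrt k) (Sum.inr i)) ^ 2 = x i ^ 2 / k := by
        intro i
        simp only [Sum.elim_inl, Sum.elim_inr]
        rw [div_sub_div_same, div_pow, hsk]
        congr 2
        rcases le_total (x i) 0 with h | h
        · simp [max_eq_right h, max_eq_left (neg_nonneg.mpr h)]
        · simp [max_eq_left h, max_eq_right (neg_nonpos.mpr h)]
      rw [Finset.sum_congr rfl fun i _ => this i, ← Finset.sum_div, h1]
      field_simp
    · have habs : (∑ i, |x i|) ≤ Real.sqrt k := by
        have := Real.sqrt_le_sqrt h2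
        rwa [Real.sqrt_sq (Finset.sum_nonneg fun i _ => abs_nonneg _)] at this
      rw [Fintype.sum_sum_type]
      simp only [Sum.elim_inl, Sum.elim_inr]
      rw [← Finset.sum_add_distrib]
      have : ∀ i : Fin n, max (x i) 0 / Real.sqrt k + max (-x i) 0 / Real.sqrt k
          = |x i| / Real.sqrt k := by
        intro i
        rw [← add_div]
        congr 1
        rcases le_total (x i) 0 with h | h
        · simp [max_eq_right h, max_eq_left (neg_nonneg.mpr h), abs_of_nonpos h]
        · simp [max_eq_left h, max_eq_right (neg_nonpos.mpr h), abs_of_nonneg h]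
      rw [Finset.sum_congr rfl fun i _ => this i, ← Finset.sum_div]
      exact (div_le_one hs).mpr habs
    · rintro (j | j) <;> exact div_nonneg (le_max_right _ _) hs.le
    · intro i
      simp only [Sum.elim_inl, Sum.elim_inr]
      rcases le_total (x i) 0 with h | h
      · rw [max_eq_right h]; simp
      · rw [max_eq_right (neg_nonpos.mpr h)]; simp
  · rintro ⟨y, hx, hq, hsum, hpos, -⟩
    have hxi : ∀ i, x i = Real.sqrt k * (y (Sum.inl i) - y (Sum.inr i)) := by
      intro i
      rw [hx, Pi.smul_apply, hAv]
      simp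
    constructor
    · have : ∑ i, x i ^ 2 = k * ∑ i, (y (Sum.inl i) - y (Sum.inr i)) ^ 2 := by
        rw [Finset.mul_sum]
        refine Finset.sum_congr rfl fun i _ => ?_
        rw [hxi i, mul_pow, hsk]
      rw [this, ← hquad, hq]
    · have habs : ∑ i, |x i| ≤ Real.sqrt k := by
        calc ∑ i, |x i| = Real.sqrt k * ∑ i, |y (Sum.inl i) - y (Sum.inr i)| := by
              rw [Finset.mul_sum]
              refine Finset.sum_congr rfl fun i _ => ?_
              rw [hxi i, abs_mul, abs_of_nonneg hs.le]
          _ ≤ Real.sqrt k * ∑ i, (y (Sum.inl i) + y (Sum.inr i)) := by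
              refine mul_le_mul_of_nonneg_left (Finset.sum_le_sum fun i _ => ?_) hs.le
              exact (abs_sub _ _).trans (by
                rw [abs_of_nonneg (hpos _), abs_of_nonneg (hpos _)])
          _ = Real.sqrt k * ∑ j, y j := by rw [Fintype.sum_sum_type, Finset.sum_add_distrib]
          _ ≤ Real.sqrt k * 1 := mul_le_mul_of_nonneg_left hsum hs.le
          _ = Real.sqrt k := mul_one _
      calc (∑ i, |x i|) ^ 2 ≤ Real.sqrt k ^ 2 :=
            pow_le_pow_left₀ (Finset.sum_nonneg fun i _ => abs_nonneg _) habs 2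
        _ = k := hsk
end

section
/- Let Q be symmetric and suppose the maximum of xᵀQx over {‖x‖₂ = 1, ‖x‖₁² ≤ k} is strictly less than λ_max(Q). Then every maximizer x* of this problem satisfies ‖x*‖₁² = k; i.e., the optimal value equals the maximum of xᵀQx over {‖x‖₂ = 1, ‖x‖₁² = k}. -/
open Matrix

private lemma qsymm {n : ℕ} (Q : Matrix (Fin n) (Fin n) ℝ) (hQ : Q.IsHermitian)
    (a b : Fin n → ℝ) : a ⬝ᵥ Q *ᵥ b = b ⬝ᵥ Q *ᵥ a := by
  have hT : Qᵀ = Q := by rw [← conjTranspose_eq_transpose_of_trivial]; exact hQ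
  have h2 : a ᵥ* Q = Q *ᵥ a := by rw [← hT, vecMul_transpose, hT]
  rw [Matrix.dotProduct_mulVec, h2, dotProduct_comm]

private lemma qexpand {n : ℕ} (Q : Matrix (Fin n) (Fin n) ℝ) (a b : Fin n → ℝ) (s r : ℝ) :
    (r • (a + s • b)) ⬝ᵥ Q *ᵥ (r • (a + s • b)) =
      r^2 * ((a ⬝ᵥ Q *ᵥ a) + s * (a ⬝ᵥ Q *ᵥ b) + s * (b ⬝ᵥ Q *ᵥ a) + s^2 * (b ⬝ᵥ Q *ᵥ b)) := by
  simp only [mulVec_add, mulVec_smul, dotProduct_add, add_dotProduct, dotProduct_smul,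
    smul_dotProduct, smul_eq_mul]
  ring

private lemma dexpand {n : ℕ} (a b : Fin n → ℝ) (s r : ℝ) :
    (r • (a + s • b)) ⬝ᵥ (r • (a + s • b)) =
      r^2 * ((a ⬝ᵥ a) + 2*s * (a ⬝ᵥ b) + s^2 * (b ⬝ᵥ b)) := by
  simp only [dotProduct_add, add_dotProduct, dotProduct_smul, smul_dotProduct, smul_eq_mul,
    dotProduct_comm b a]
  ring

private lemma sumsq {n : ℕ} (a : Fin n → ℝ) : (∑ i, (a i)^2) = a ⬝ᵥ a := by
  simp [dotProduct, sq]

set_option maxHeartbeats 1000000 in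
theorem stmt_18 (n : ℕ) (hn : 0 < n)
    (Q : Matrix (Fin n) (Fin n) ℝ) (hQ : Q.IsHermitian)
    (k : ℝ) (hk1 : 1 ≤ k) (hkn : k ≤ n)
    (m : ℝ)
    (hm : IsGreatest {v : ℝ | ∃ x : Fin n → ℝ,
        (∑ i, (x i) ^ 2) = 1 ∧ (∑ i, |x i|) ^ 2 ≤ k ∧ v = x ⬝ᵥ Q *ᵥ x} m)
    (hlt : m < ⨆ i, hQ.eigenvalues i) :
    (∀ x : Fin n → ℝ, (∑ i, (x i) ^ 2) = 1 → (∑ i, |x i|) ^ 2 ≤ k →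
      x ⬝ᵥ Q *ᵥ x = m → (∑ i, |x i|) ^ 2 = k) ∧
    IsGreatest {v : ℝ | ∃ x : Fin n → ℝ,
        (∑ i, (x i) ^ 2) = 1 ∧ (∑ i, |x i|) ^ 2 = k ∧ v = x ⬝ᵥ Q *ᵥ x} m := by
  -- eigenvector for the top eigenvalue
  have : Nonempty (Fin n) := ⟨⟨0, hn⟩⟩
  set lam := ⨆ i, hQ.eigenvalues i with hlam
  obtain ⟨v, hv1, hv2⟩ : ∃ v : Fin n → ℝ, (∑ i, (v i)^2) = 1 ∧ Q *ᵥ v = lam • v := by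
    obtain ⟨i₀, hi₀⟩ := Finite.exists_max hQ.eigenvalues
    have hsup : lam = hQ.eigenvalues i₀ :=
      le_antisymm (ciSup_le hi₀) (le_ciSup (Set.Finite.bddAbove (Set.finite_range _)) i₀)
    refine ⟨hQ.eigenvectorBasis i₀, ?_, ?_⟩
    · have h1 : ‖hQ.eigenvectorBasis i₀‖ = 1 := hQ.eigenvectorBasis.orthonormal.1 i₀
      have := congrArg (· ^ 2) h1
      rw [EuclideanSpace.norm_eq] at this
      simp only [Real.norm_eq_abs, sq_abs] at this
      rw [Real.sq_sqrt (by positivity)] at this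
      simpa using this
    · rw [hsup]; exact hQ.mulVec_eigenvectorBasis i₀
  have key : ∀ x : Fin n → ℝ, (∑ i, (x i) ^ 2) = 1 → (∑ i, |x i|) ^ 2 ≤ k →
      x ⬝ᵥ Q *ᵥ x = m → (∑ i, |x i|) ^ 2 = k := by
    intro x hx1 hx2 hxm
    by_contra hne
    have hlt1 : (∑ i, |x i|) ^ 2 < k := lt_of_le_of_ne hx2 hne
    set L : ℝ := ∑ i, |x i| with hL
    have hL0 : 0 ≤ L := Finset.sum_nonneg fun i _ => abs_nonneg _
    have hk0 : (0:ℝ) < k := lt_of_lt_of_le one_pos hk1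
    have hLk : L < Real.sqrt k := by
      rw [show L = Real.sqrt (L^2) from (Real.sqrt_sq hL0).symm]
      exact Real.sqrt_lt_sqrt (by positivity) hlt1
    have hxx : x ⬝ᵥ x = 1 := by rw [← sumsq]; exact hx1
    have hvv : v ⬝ᵥ v = 1 := by rw [← sumsq]; exact hv1
    have hvQv : v ⬝ᵥ Q *ᵥ v = lam := by
      rw [hv2, dotProduct_smul, smul_eq_mul, hvv, mul_one]
    set α : ℝ := v ⬝ᵥ x with hα
    set w : Fin n → ℝ := v - α • x with hw
    have hveq : v = α • x + w := by simp [hw]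
    have hwx : x ⬝ᵥ w = 0 := by
      simp only [hw, dotProduct_sub, dotProduct_smul, smul_eq_mul, hxx, mul_one,
        dotProduct_comm x v]
      rw [← hα, sub_self]
    have hxw : w ⬝ᵥ x = 0 := by rw [dotProduct_comm]; exact hwx
    by_cases hw0 : w = 0
    · -- v = α • x, so lam = α² m = m ; contradiction
      have hvx : v = α • x := by rw [hveq, hw0, add_zero]
      have h1 : α^2 = 1 := by
        have := hvv
        rw [hvx] at this
        simpa [dotProduct_smul, smul_dotProduct, hxx, sq, mul_assoc] using this
      have h2 : lam = α^2 * m := by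
        rw [← hvQv, hvx]
        simp only [smul_dotProduct, mulVec_smul, dotProduct_smul, smul_eq_mul, hxm]
        ring
      rw [h2, h1, one_mul] at hlt
      exact lt_irrefl _ hlt
    · set β2 : ℝ := w ⬝ᵥ w with hβ2
      have hβ2pos : 0 < β2 := by
        have hnn : 0 ≤ β2 := by rw [hβ2, ← sumsq]; positivity
        exact hnn.lt_of_ne fun h => hw0 (dotProduct_self_eq_zero.mp h.symm)
      set c : ℝ := x ⬝ᵥ Q *ᵥ w with hc
      have hcw : w ⬝ᵥ Q *ᵥ x = c := (qsymm Q hQ w x).trans hc.symm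
      set d : ℝ := w ⬝ᵥ Q *ᵥ w with hd
      -- identities from v = α x + w
      have hid1 : 1 = α^2 + β2 := by
        have := hvv
        rw [hveq] at this
        simp only [dotProduct_add, add_dotProduct, dotProduct_smul, smul_dotProduct,
          smul_eq_mul, hxx, hwx, hxw] at this
        nlinarith [this]
      have hid2 : lam = α^2 * m + 2*α*c + d := by
        have := hvQv
        rw [hveq] at this
        simp only [mulVec_add, mulVec_smul, dotProduct_add, add_dotProduct, dotProduct_smul,
          smul_dotProduct, smul_eq_mul, hxm] at this
        rw [hcw, ← hc, ← hd] at this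
        nlinarith [this]
      set D : ℝ := d - m * β2 with hD
      have hlamm : lam - m = 2*α*c + D := by
        rw [hD]; linear_combination hid2 - m * hid1
      set W : ℝ := ∑ i, |w i| with hW
      have hW0 : 0 ≤ W := Finset.sum_nonneg fun i _ => abs_nonneg _
      have hgap : 0 < Real.sqrt k - L := by linarith
      -- choose the perturbation size s
      obtain ⟨s, hs_pos, hs_bd⟩ : ∃ s : ℝ, 0 < s*(2*c + s*D) ∧ |s| ≤ (Real.sqrt k - L)/(W+1) := by
        by_cases hcz : c = 0
        · have hDpos : 0 < D := by
            have : lam - m = D := by rw [hlamm, hcz]; ring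
            linarith [hlt]
          refine ⟨(Real.sqrt k - L)/(W+1), ?_, ?_⟩
          · have hspos : 0 < (Real.sqrt k - L)/(W+1) := by positivity
            rw [hcz, show ∀ t : ℝ, t*(2*0 + t*D) = t^2*D from fun t => by ring]
            exact mul_pos (pow_pos hspos 2) hDpos
          · rw [abs_of_pos (by positivity)]
        · set δ : ℝ := min ((Real.sqrt k - L)/((W+1)*(|c|+1))) (1/(|D|+1)) with hδ
          have hδpos : 0 < δ := lt_min (by positivity) (by positivity)
          refine ⟨c * δ, ?_, ?_⟩
          · have h2D : 0 < 2 + δ * D := by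
              have h1 : δ * |D| ≤ (1/(|D|+1)) * |D| :=
                mul_le_mul_of_nonneg_right (min_le_right _ _) (abs_nonneg _)
              have h2 : (1/(|D|+1)) * |D| < 1 := by
                rw [div_mul_eq_mul_div, one_mul, div_lt_one (by positivity)]; linarith
              have h3 : -(δ * D) ≤ δ * |D| := by
                rw [← mul_neg]
                exact mul_le_mul_of_nonneg_left (neg_le_abs D) hδpos.le
              linarith
            have hcc : 0 < c^2 := by positivity
            have : c * δ * (2*c + c*δ*D) = δ * c^2 * (2 + δ*D) := by ring
            rw [this]
            positivity
          · have h1 : |c * δ| = |c| * δ := by rw [abs_mul, abs_of_pos hδpos]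
            rw [h1]
            have h2 : δ ≤ (Real.sqrt k - L)/((W+1)*(|c|+1)) := min_le_left _ _
            have h3 : |c| * δ ≤ |c| * ((Real.sqrt k - L)/((W+1)*(|c|+1))) :=
              mul_le_mul_of_nonneg_left h2 (abs_nonneg _)
            have h4 : |c| * ((Real.sqrt k - L)/((W+1)*(|c|+1))) ≤ (Real.sqrt k - L)/(W+1) := by
              have e1 : |c| / (|c|+1) ≤ 1 := by
                rw [div_le_one (by positivity)]; linarith [abs_nonneg c]
              have e2 : |c| * ((Real.sqrt k - L)/((W+1)*(|c|+1)))
                  = (|c|/(|c|+1)) * ((Real.sqrt k - L)/(W+1)) := by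
                field_simp
              rw [e2]
              calc (|c|/(|c|+1)) * ((Real.sqrt k - L)/(W+1))
                  ≤ 1 * ((Real.sqrt k - L)/(W+1)) :=
                    mul_le_mul_of_nonneg_right e1 (by positivity)
                _ = (Real.sqrt k - L)/(W+1) := one_mul _
            linarith
      -- build the perturbed vector
      set u : ℝ := 1 + s^2 * β2 with hu
      have hu1 : 1 ≤ u := by nlinarith [sq_nonneg s, hβ2pos]
      have hupos : 0 < u := by linarith
      set r : ℝ := (Real.sqrt u)⁻¹ with hr
      have hsu1 : 1 ≤ Real.sqrt u := by
        rw [show (1:ℝ) = Real.sqrt 1 from (Real.sqrt_one).symm]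
        exact Real.sqrt_le_sqrt hu1
      have hrpos : 0 < r := by rw [hr]; positivity
      have hrle1 : r ≤ 1 := by
        rw [hr, inv_le_one_iff₀]; right; exact hsu1
      have hr2 : r^2 = u⁻¹ := by
        rw [hr, ← Real.sqrt_inv, Real.sq_sqrt (by positivity)]
      set y : Fin n → ℝ := r • (x + s • w) with hy
      have hy_sq : (∑ i, (y i)^2) = 1 := by
        rw [sumsq, hy, dexpand, hxx, hwx, ← hβ2, hr2]
        field_simp [hu]
        rw [hu]; ring
      have hy_l1 : (∑ i, |y i|) ^ 2 ≤ k := by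
        have hstep : ∀ i, |y i| ≤ |x i| + |s| * |w i| := by
          intro i
          have : y i = r * (x i + s * w i) := by simp [hy]; ring
          rw [this, abs_mul, abs_of_pos hrpos]
          calc r * |x i + s * w i| ≤ 1 * |x i + s * w i| :=
                mul_le_mul_of_nonneg_right hrle1 (abs_nonneg _)
            _ = |x i + s * w i| := one_mul _
            _ ≤ |x i| + |s * w i| := abs_add_le _ _
            _ = |x i| + |s| * |w i| := by rw [abs_mul]
        have hsum : (∑ i, |y i|) ≤ L + |s| * W := by
          rw [hL, hW, Finset.mul_sum]
          exact le_trans (Finset.sum_le_sum fun i _ => hstep i)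
            (by rw [Finset.sum_add_distrib])
        have hsW : |s| * W ≤ Real.sqrt k - L := by
          have e1 : |s| * W ≤ ((Real.sqrt k - L)/(W+1)) * W :=
            mul_le_mul_of_nonneg_right hs_bd hW0
          have e2 : ((Real.sqrt k - L)/(W+1)) * W ≤ Real.sqrt k - L := by
            rw [div_mul_eq_mul_div, div_le_iff₀ (by positivity)]
            exact mul_le_mul_of_nonneg_left (by linarith) hgap.le
          linarith
        have hfin : (∑ i, |y i|) ≤ Real.sqrt k := by linarith
        have hynn : 0 ≤ ∑ i, |y i| := Finset.sum_nonneg fun i _ => abs_nonneg _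
        calc (∑ i, |y i|)^2 ≤ (Real.sqrt k)^2 := pow_le_pow_left₀ hynn hfin 2
          _ = k := Real.sq_sqrt hk0.le
      have hy_val : y ⬝ᵥ Q *ᵥ y = m + r^2 * (s * (2*c + s*D)) := by
        rw [hy, qexpand, hxm, ← hc, hcw, ← hd, hD, hr2]
        field_simp [hu]
        ring
      have hval_gt : m < y ⬝ᵥ Q *ᵥ y := by
        rw [hy_val]
        have : 0 < r^2 * (s * (2*c + s*D)) := mul_pos (pow_pos hrpos 2) hs_pos
        linarith
      have := hm.2 ⟨y, hy_sq, hy_l1, rfl⟩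
      linarith
  refine ⟨key, ?_, ?_⟩
  · obtain ⟨x, hx1, hx2, hxv⟩ := hm.1
    exact ⟨x, hx1, key x hx1 hx2 hxv.symm, hxv⟩
  · rintro t ⟨x, hx1, hx2, hxv⟩
    exact hm.2 ⟨x, hx1, le_of_eq hx2, hxv⟩
end
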